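/- Let $V$ be a real inner product space with an almost contact structure: a linear map $\phi$, a unit vector $\xi$, and the linear form $\eta(Z) = g(Z, \xi)$, satisfying $\phi^2 Z = -Z + \eta(Z)\xi$ and $g(\phi Z_1, \phi Z_2) = g(Z_1, Z_2) - \eta(Z_1)\eta(Z_2)$. Let $R$ be the generalized Sasakian space form curvature tensor with constants $c_1, c_2, c_3$: $R(Z_1,Z_2,Z_3,Z_4) = c_1\{g(Z_2,Z_3)g(Z_1,Z_4) - g(Z_1,Z_3)g(Z_2,Z_4)\} + c_2\{g(Z_1,\phi Z_3)g(\phi Z_2,Z_4) - g(Z_2,\phi Z_3)g(\phi Z_1,Z_4) + 2g(Z_1,\phi Z_2)g(\phi Z_3,Z_4)\} + c_3\{\eta(Z_1)\eta(Z_3)g(Z_2,Z_4) - \eta(Z_2)\eta(Z_3)g(Z_1,Z_4) + g(Z_1,Z_3)\eta(Z_2)\eta(Z_4) - g(Z_2,Z_3)\eta(Z_1)\eta(Z_4)\}$. If $\{v_1,\dots,v_\ell\}$ is an orthonormal family whose span contains $\xi$, then $\sum_{i,j=1}^{\ell} R(v_i,v_j,v_j,v_i) = c_1 \ell(\ell-1)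 + 3c_2\|Q\|^2 - 2(\ell-1)c_3$, where $\|Q\|^2 = \sum_i \|Qv_i\|^2$ and $Qv_i$ is the projection of $\phi v_i$ onto $\mathrm{span}\{v_1,\dots,v_\ell\}$. -/

import Mathlib

open scoped InnerProductSpace

/-- For the generalized Sasakian space form curvature tensor with constants
`c₁, c₂, c₃` on an inner product space with almost contact structure `(φ, ξ, η)`,
and an orthonormal family `v₁,…,v_ℓ` whose span contains `ξ`:
`∑_{i,j} R(vᵢ,vⱼ,vⱼ,vᵢ) = c₁ ℓ(ℓ-1) + 3c₂ ‖Q‖² - 2(ℓ-1)c₃`, where `Q vᵢ` is the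
projection of `φ vᵢ` onto `span{v₁,…,v_ℓ}`. -/
theorem stmt_13 {V : Type*} [NormedAddCommGroup V] [InnerProductSpace ℝ V]
    [FiniteDimensional ℝ V]
    (c₁ c₂ c₃ : ℝ) (φ : V →ₗ[ℝ] V) (ξ : V) (hξ : ‖ξ‖ = 1)
    (hphi2 : ∀ z, φ (φ z) = -z + ⟪z, ξ⟫_ℝ • ξ)
    (hcompat : ∀ z w, ⟪φ z, φ w⟫_ℝ = ⟪z, w⟫_ℝ - ⟪z, ξ⟫_ℝ * ⟪w, ξ⟫_ℝ)
    (ℓ : ℕ) (v : Fin ℓ → V) (hv : Orthonormal ℝ v)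
    (hxi : ξ ∈ Submodule.span ℝ (Set.range v))
    (R : V → V → V → V → ℝ)
    (hR : ∀ Z1 Z2 Z3 Z4, R Z1 Z2 Z3 Z4 =
      c₁ * (⟪Z2, Z3⟫_ℝ * ⟪Z1, Z4⟫_ℝ - ⟪Z1, Z3⟫_ℝ * ⟪Z2, Z4⟫_ℝ)
      + c₂ * (⟪Z1, φ Z3⟫_ℝ * ⟪φ Z2, Z4⟫_ℝ - ⟪Z2, φ Z3⟫_ℝ * ⟪φ Z1, Z4⟫_ℝ
          + 2 * ⟪Z1, φ Z2⟫_ℝ * ⟪φ Z3, Z4⟫_ℝ)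
      + c₃ * (⟪Z1, ξ⟫_ℝ * ⟪Z3, ξ⟫_ℝ * ⟪Z2, Z4⟫_ℝ - ⟪Z2, ξ⟫_ℝ * ⟪Z3, ξ⟫_ℝ * ⟪Z1, Z4⟫_ℝ
          + ⟪Z1, Z3⟫_ℝ * ⟪Z2, ξ⟫_ℝ * ⟪Z4, ξ⟫_ℝ - ⟪Z2, Z3⟫_ℝ * ⟪Z1, ξ⟫_ℝ * ⟪Z4, ξ⟫_ℝ)) :
    ∑ i : Fin ℓ, ∑ j : Fin ℓ, R (v i) (v j) (v j) (v i)
      = c₁ * ℓ * ((ℓ : ℝ) - 1)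
        + 3 * c₂ * ∑ i : Fin ℓ,
            ‖(Submodule.orthogonalProjectionOnto (Submodule.span ℝ (Set.range v)) (φ (v i)) : V)‖ ^ 2
        - 2 * ((ℓ : ℝ) - 1) * c₃ := by
  classical
  have hξξ : ⟪ξ, ξ⟫_ℝ = 1 := by rw [real_inner_self_eq_norm_sq, hξ]; norm_num
  -- η ∘ φ = 0
  have hηφ : ∀ z, ⟪φ z, ξ⟫_ℝ = 0 := by
    intro z
    have ha := hcompat (φ z) (φ z)
    have hb := hcompat z z
    rw [hphi2 z] at ha
    have hc : ⟪(-z + ⟪z, ξ⟫_ℝ • ξ : V), -z + ⟪z, ξ⟫_ℝ • ξ⟫_ℝ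
        = ⟪z, z⟫_ℝ - ⟪z, ξ⟫_ℝ ^ 2 := by
      simp [inner_add_left, inner_add_right, inner_smul_left, inner_smul_right,
        real_inner_comm ξ z, hξξ, -inner_self_eq_norm_sq_to_K]
      ring
    rw [hc] at ha
    have : ⟪φ z, ξ⟫_ℝ * ⟪φ z, ξ⟫_ℝ = 0 := by nlinarith [ha, hb]
    exact mul_self_eq_zero.mp this
  -- skew-symmetry of φ
  have hskew : ∀ x y : V, ⟪φ x, y⟫_ℝ = -⟪x, φ y⟫_ℝ := by
    intro x y
    have ha := hcompat x (φ y)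
    rw [hphi2 y, hηφ y] at ha
    simp [inner_add_right, inner_smul_right] at ha
    rw [hηφ x] at ha
    linarith [ha]
  set U := Submodule.span ℝ (Set.range v) with hU
  -- projection formula
  have hproj : ∀ w : V, (Submodule.orthogonalProjectionOnto U w : V) = ∑ i, ⟪v i, w⟫_ℝ • v i := by
    intro w
    rw [← Submodule.starProjection_apply]
    apply Submodule.eq_starProjection_of_mem_orthogonal
    · exact Submodule.sum_mem _ fun i _ =>
        Submodule.smul_mem _ _ (Submodule.subset_span ⟨i, rfl⟩)
    · rw [Submodule.mem_orthogonal]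
      intro u hu
      induction hu using Submodule.span_induction with
      | mem x hx =>
          obtain ⟨i, rfl⟩ := hx
          rw [inner_sub_right, hv.inner_right_fintype (fun j => ⟪v j, w⟫_ℝ) i, sub_self]
      | zero => simp
      | add x y _ _ hx hy => rw [inner_add_left, hx, hy, add_zero]
      | smul a x _ hx => rw [real_inner_smul_left, hx, mul_zero]
  have hnorm : ∀ w : V, ‖(Submodule.orthogonalProjectionOnto U w : V)‖ ^ 2 = ∑ i, ⟪v i, w⟫_ℝ ^ 2 := by
    intro w
    rw [hproj w, ← real_inner_self_eq_norm_sq,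
      hv.inner_sum (fun j => ⟪v j, w⟫_ℝ) (fun j => ⟪v j, w⟫_ℝ)]
    simp [sq]
  have hsumη : ∑ i, ⟪v i, ξ⟫_ℝ ^ 2 = 1 := by
    rw [← hnorm ξ, ← Submodule.starProjection_apply, Submodule.starProjection_eq_self_iff.mpr hxi, hξ]
    norm_num
  have hij : ∀ i j, ⟪v i, v j⟫_ℝ = if i = j then 1 else 0 := orthonormal_iff_ite.mp hv
  have hφvv : ∀ x : V, ⟪x, φ x⟫_ℝ = 0 := by
    intro x
    have ha := hskew x x
    have hb : ⟪φ x, x⟫_ℝ = ⟪x, φ x⟫_ℝ := real_inner_comm _ _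
    linarith
  -- pointwise formula
  have hterm : ∀ i j, R (v i) (v j) (v j) (v i)
      = c₁ * (1 - (if i = j then (1:ℝ) else 0))
        + c₂ * (3 * ⟪v j, φ (v i)⟫_ℝ ^ 2)
        + c₃ * (2 * (if i = j then (1:ℝ) else 0) * (⟪v i, ξ⟫_ℝ * ⟪v j, ξ⟫_ℝ)
            - ⟪v j, ξ⟫_ℝ ^ 2 - ⟪v i, ξ⟫_ℝ ^ 2) := by
    intro i j
    have e7 : ⟪v i, φ (v j)⟫_ℝ = -⟪v j, φ (v i)⟫_ℝ := by
      rw [real_inner_comm, hskew]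
    have e8 : ⟪φ (v j), v i⟫_ℝ = -⟪v j, φ (v i)⟫_ℝ := hskew _ _
    have e9 : ⟪v j, v i⟫_ℝ = if i = j then 1 else 0 := by
      rw [real_inner_comm, hij]
    rw [hR, hij i j, hij j j, hij i i, e9, hφvv (v j), e7, e8]
    by_cases h : i = j <;> simp [h] <;> ring
  simp only [hterm]
  have sδg : ∀ (i : Fin ℓ) (g : Fin ℓ → ℝ),
      ∑ j, (if i = j then (1:ℝ) else 0) * g j = g i := by
    intro i g
    simp
  have inner_sum : ∀ i : Fin ℓ,
      (∑ j, (c₁ * (1 - (if i = j then (1:ℝ) else 0))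
        + c₂ * (3 * ⟪v j, φ (v i)⟫_ℝ ^ 2)
        + c₃ * (2 * (if i = j then (1:ℝ) else 0) * (⟪v i, ξ⟫_ℝ * ⟪v j, ξ⟫_ℝ)
            - ⟪v j, ξ⟫_ℝ ^ 2 - ⟪v i, ξ⟫_ℝ ^ 2)))
      = (ℓ : ℝ) * (c₁ - c₃ * ⟪v i, ξ⟫_ℝ ^ 2) + (-c₁ + 2 * c₃ * ⟪v i, ξ⟫_ℝ ^ 2)
        + 3 * c₂ * ‖(Submodule.orthogonalProjectionOnto U (φ (v i)) : V)‖ ^ 2 + (-c₃) := by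
    intro i
    have step : ∀ j, (c₁ * (1 - (if i = j then (1:ℝ) else 0))
        + c₂ * (3 * ⟪v j, φ (v i)⟫_ℝ ^ 2)
        + c₃ * (2 * (if i = j then (1:ℝ) else 0) * (⟪v i, ξ⟫_ℝ * ⟪v j, ξ⟫_ℝ)
            - ⟪v j, ξ⟫_ℝ ^ 2 - ⟪v i, ξ⟫_ℝ ^ 2))
        = (c₁ - c₃ * ⟪v i, ξ⟫_ℝ ^ 2)
          + (if i = j then (1:ℝ) else 0) * (-c₁ + 2 * c₃ * ⟪v i, ξ⟫_ℝ * ⟪v j, ξ⟫_ℝ)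
          + 3 * c₂ * ⟪v j, φ (v i)⟫_ℝ ^ 2
          + (-c₃) * ⟪v j, ξ⟫_ℝ ^ 2 := by
      intro j; ring
    rw [Finset.sum_congr rfl fun j _ => step j]
    rw [Finset.sum_add_distrib, Finset.sum_add_distrib, Finset.sum_add_distrib,
      Finset.sum_const, sδg i (fun j => -c₁ + 2 * c₃ * ⟪v i, ξ⟫_ℝ * ⟪v j, ξ⟫_ℝ),
      ← Finset.mul_sum, ← Finset.mul_sum, hsumη, hnorm (φ (v i))]
    simp [Finset.card_univ, nsmul_eq_mul]
    ring
  rw [Finset.sum_congr rfl fun i _ => inner_sum i]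
  rw [Finset.sum_add_distrib, Finset.sum_add_distrib, Finset.sum_add_distrib,
    Finset.sum_const, ← Finset.mul_sum]
  have k1 : ∑ i : Fin ℓ, (c₁ - c₃ * ⟪v i, ξ⟫_ℝ ^ 2) = (ℓ:ℝ) * c₁ - c₃ := by
    rw [Finset.sum_sub_distrib, Finset.sum_const, ← Finset.mul_sum, hsumη]
    simp [Finset.card_univ, nsmul_eq_mul]
  have k2 : ∑ i : Fin ℓ, (-c₁ + 2 * c₃ * ⟪v i, ξ⟫_ℝ ^ 2)
      = (ℓ:ℝ) * (-c₁) + 2 * c₃ := by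
    rw [Finset.sum_add_distrib, Finset.sum_const, ← Finset.mul_sum, hsumη]
    simp [Finset.card_univ, nsmul_eq_mul]
  have k3 : ∑ x : Fin ℓ, 3 * c₂ * ‖(Submodule.orthogonalProjectionOnto U (φ (v x)) : V)‖ ^ 2
      = 3 * c₂ * ∑ i : Fin ℓ, ‖(Submodule.orthogonalProjectionOnto U (φ (v i)) : V)‖ ^ 2 := by
    rw [← Finset.mul_sum]
  rw [k1, k2, k3]
  simp [Finset.card_univ, nsmul_eq_mul]
  ring
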